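/- A positive squarefree integer d not divisible by 3 is representable as d = x² + 3y² with x, y ∈ ℤ if and only if every prime divisor of d is congruent to 1 modulo 3. -/

import Mathlib

/-- Balanced residue: every integer is congruent mod `m` to some `a` with `4a² ≤ m²`. -/
lemma balanced_residue (x m : ℤ) (hm : 0 < m) :
    ∃ a : ℤ, m ∣ x - a ∧ 4 * a ^ 2 ≤ m ^ 2 := by
  have h0 : 0 ≤ x % m := Int.emod_nonneg x hm.ne'
  have h1 : x % m < m := Int.emod_lt_of_pos x hm
  have hx : x % m + m * (x / m) = x := Int.emod_add_mul_ediv x m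
  by_cases h : 2 * (x % m) ≤ m
  · exact ⟨x % m, ⟨x / m, by linarith⟩, by nlinarith⟩
  · exact ⟨x % m - m, ⟨x / m + 1, by ring_nf; linarith⟩, by nlinarith⟩

/-- Multiplicativity of the form x² + 3y². -/
lemma rep_mul {a b : ℤ} (ha : ∃ x y : ℤ, a = x ^ 2 + 3 * y ^ 2)
    (hb : ∃ x y : ℤ, b = x ^ 2 + 3 * y ^ 2) :
    ∃ x y : ℤ, a * b = x ^ 2 + 3 * y ^ 2 := by
  obtain ⟨x, y, rfl⟩ := ha
  obtain ⟨u, v, rfl⟩ := hb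
  exact ⟨x * u - 3 * y * v, x * v + y * u, by ring⟩

/-- Fermat descent for the form x² + 3y². -/
lemma descent (p : ℕ) (hp : p.Prime) :
    ∀ m : ℕ, 0 < m → m < p → ∀ x y : ℤ, (m : ℤ) * p = x ^ 2 + 3 * y ^ 2 →
      ∃ a b : ℤ, (p : ℤ) = a ^ 2 + 3 * b ^ 2 := by
  intro m
  induction m using Nat.strong_induction_on with
  | _ m ih =>
    intro hm0 hmp x y hxy
    rcases eq_or_lt_of_le (Nat.one_le_iff_ne_zero.mpr hm0.ne') with h1 | h1
    · exact ⟨x, y, by rw [← hxy, ← h1]; push_cast; ring⟩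
    -- 1 < m
    have hmZ : (0 : ℤ) < (m : ℤ) := by exact_mod_cast hm0
    obtain ⟨a, ⟨s, hs⟩, ha⟩ := balanced_residue x m hmZ
    obtain ⟨b, ⟨t, ht⟩, hb⟩ := balanced_residue y m hmZ
    have hxa : x = a + m * s := by linarith
    have hyb : y = b + m * t := by linarith
    -- m divides a² + 3b²
    have hdvd : (m : ℤ) ∣ a ^ 2 + 3 * b ^ 2 := by
      have h : a ^ 2 + 3 * b ^ 2 =
          (m : ℤ) * p - m * (2 * a * s + m * s ^ 2 + 6 * b * t + 3 * m * t ^ 2) := by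
        rw [hxy, hxa, hyb]; ring
      rw [h]
      exact dvd_sub (Dvd.intro _ rfl) (Dvd.intro _ rfl)
    obtain ⟨r, hr⟩ := hdvd
    have hr0 : 0 ≤ r := by
      by_contra hneg
      push_neg at hneg
      nlinarith [sq_nonneg a, sq_nonneg b, mul_pos hmZ (neg_pos.mpr hneg)]
    have hrm : r ≤ m := by
      have h : (m : ℤ) * r ≤ (m : ℤ) * m := by nlinarith [ha, hb, hr]
      exact le_of_mul_le_mul_left h hmZ
    -- helper: m ∣ p is impossible
    have hnd : ¬ ((m : ℤ) ∣ (p : ℤ)) := by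
      intro h
      have h' : m ∣ p := by exact_mod_cast h
      rcases (Nat.Prime.eq_one_or_self_of_dvd hp m h') with h'' | h'' <;> omega
    rcases eq_or_lt_of_le hr0 with hr0' | hr0'
    · -- r = 0 : then a = b = 0, m² ∣ mp, contradiction
      exfalso
      have hab : a ^ 2 + 3 * b ^ 2 = 0 := by rw [hr, ← hr0', mul_zero]
      have ha0 : a = 0 := by nlinarith [sq_nonneg a, sq_nonneg b]
      have hb0 : b = 0 := by nlinarith [sq_nonneg a, sq_nonneg b]
      apply hnd
      refine ⟨s ^ 2 + 3 * t ^ 2, mul_left_cancel₀ hmZ.ne' ?_⟩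
      rw [hxy, hxa, hyb, ha0, hb0]; ring
    rcases eq_or_lt_of_le hrm with hrm' | hrm'
    · -- r = m : then 4a² = m², 4b² = m², again m² ∣ mp
      exfalso
      have hab : a ^ 2 + 3 * b ^ 2 = (m : ℤ) * m := by rw [hr, hrm']
      have hmm : (m : ℤ) * m = (m : ℤ) ^ 2 := (sq (m : ℤ)).symm
      have h4a : 4 * a ^ 2 = (m : ℤ) ^ 2 := by linarith [hab, ha, hb, hmm]
      have h4b : 4 * b ^ 2 = (m : ℤ) ^ 2 := by linarith [hab, ha, hb, hmm]
      obtain ⟨u, hu⟩ : (m : ℤ) ∣ 2 * a := by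
        have h : (2 * a - m) * (2 * a + m) = 0 := by linear_combination h4a
        rcases mul_eq_zero.mp h with h | h
        · exact ⟨1, by linarith⟩
        · exact ⟨-1, by linarith⟩
      obtain ⟨v, hv⟩ : (m : ℤ) ∣ 2 * b := by
        have h : (2 * b - m) * (2 * b + m) = 0 := by linear_combination h4b
        rcases mul_eq_zero.mp h with h | h
        · exact ⟨1, by linarith⟩
        · exact ⟨-1, by linarith⟩
      apply hnd
      refine ⟨1 + s * u + 3 * t * v + s ^ 2 + 3 * t ^ 2,
        mul_left_cancel₀ hmZ.ne' ?_⟩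
      rw [hxy, hxa, hyb]
      linear_combination hab + ((m : ℤ) * s) * hu + (3 * (m : ℤ) * t) * hv
    · -- 0 < r < m : descend
      obtain ⟨X, hX⟩ : (m : ℤ) ∣ x * a + 3 * y * b := by
        refine ⟨a * s + 3 * b * t + r, ?_⟩
        rw [hxa, hyb]; linarith [hr]
      obtain ⟨Y, hY⟩ : (m : ℤ) ∣ x * b - y * a := by
        refine ⟨s * b - t * a, ?_⟩
        rw [hxa, hyb]; ring
      have hcomp : (m : ℤ) * m * (X ^ 2 + 3 * Y ^ 2) = (m : ℤ) * m * (r * p) := by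
        have h : (x * a + 3 * y * b) ^ 2 + 3 * (x * b - y * a) ^ 2
            = (x ^ 2 + 3 * y ^ 2) * (a ^ 2 + 3 * b ^ 2) := by ring
        rw [hX, hY, ← hxy, hr] at h
        linear_combination h
      have hfin : X ^ 2 + 3 * Y ^ 2 = r * p :=
        mul_left_cancel₀ (by positivity) hcomp
      have hrcast : ((r.toNat : ℤ)) = r := Int.toNat_of_nonneg hr0
      have h1' : 0 < r.toNat := by
        have h : (0 : ℤ) < (r.toNat : ℤ) := hrcast ▸ hr0'
        exact_mod_cast h
      have h2' : r.toNat < m := by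
        have h : ((r.toNat : ℤ)) < (m : ℤ) := hrcast ▸ hrm'
        exact_mod_cast h
      exact ih r.toNat h2' h1' (h2'.trans hmp) X Y (by rw [hrcast]; linarith [hfin])

/-- A prime p ≡ 1 mod 3 admits a square root of -3 mod p. -/
lemma sqrt_neg_three (p : ℕ) (hp : p.Prime) (h1 : p % 3 = 1) :
    ∃ t : ZMod p, t ^ 2 = -3 := by
  haveI : Fact p.Prime := ⟨hp⟩
  have hcard : Fintype.card (ZMod p)ˣ = p - 1 := ZMod.card_units p
  have h3dvd : 3 ∣ Fintype.card (ZMod p)ˣ := by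
    rw [hcard]
    have := hp.two_le
    omega
  haveI : Fact (Nat.Prime 3) := ⟨by norm_num⟩
  obtain ⟨u, hu⟩ := exists_prime_orderOf_dvd_card 3 h3dvd
  set ω : ZMod p := (u : ZMod p) with hω
  have hu3 : u ^ 3 = 1 := by rw [← hu]; exact pow_orderOf_eq_one u
  have hω3 : ω ^ 3 = 1 := by
    rw [hω, ← Units.val_pow_eq_pow_val, hu3, Units.val_one]
  have hωne : ω ≠ 1 := by
    intro h
    have h' : u = 1 := Units.ext (h.trans Units.val_one.symm)
    rw [h', orderOf_one] at hu
    norm_num at hu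
  have hsum : ω ^ 2 + ω + 1 = 0 := by
    have h : (ω - 1) * (ω ^ 2 + ω + 1) = 0 := by
      have h' : (ω - 1) * (ω ^ 2 + ω + 1) = ω ^ 3 - 1 := by ring
      rw [h', hω3, sub_self]
    rcases mul_eq_zero.mp h with h | h
    · exact absurd (by linear_combination h : ω = 1) hωne
    · exact h
  exact ⟨2 * ω + 1, by linear_combination 4 * hsum⟩

/-- A prime p ≡ 1 mod 3 is of the form x² + 3y². -/
lemma prime_rep (p : ℕ) (hp : p.Prime) (h1 : p % 3 = 1) :
    ∃ x y : ℤ, (p : ℤ) = x ^ 2 + 3 * y ^ 2 := by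
  haveI : Fact p.Prime := ⟨hp⟩
  obtain ⟨t, ht⟩ := sqrt_neg_three p hp h1
  have hp3 : 3 ≤ p := by have := hp.two_le; omega
  have hpZ : (0 : ℤ) < (p : ℤ) := by exact_mod_cast hp.pos
  -- lift t to ℤ
  have hdvd : (p : ℤ) ∣ (t.val : ℤ) ^ 2 + 3 := by
    have h : (((t.val : ℤ) ^ 2 + 3 : ℤ) : ZMod p) = 0 := by
      push_cast
      rw [ZMod.natCast_val, ZMod.cast_id, ht]
      ring
    exact_mod_cast (ZMod.intCast_zmod_eq_zero_iff_dvd _ _).mp h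
  obtain ⟨T, ⟨w, hw⟩, hT⟩ := balanced_residue (t.val : ℤ) p hpZ
  have hdvd' : (p : ℤ) ∣ T ^ 2 + 3 := by
    have h : T ^ 2 + 3 = ((t.val : ℤ) ^ 2 + 3) - (p * w) * ((t.val : ℤ) + T) := by
      have h' : (t.val : ℤ) = T + p * w := by linarith
      rw [h']; ring
    rw [h]
    exact dvd_sub hdvd (Dvd.dvd.mul_right (Dvd.intro _ rfl) _)
  obtain ⟨m, hm⟩ := hdvd'
  have hm0 : 0 < m := by nlinarith [sq_nonneg T]
  have hmp : m < p := by nlinarith [hT, hm, hpZ]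
  have hmcast : ((m.toNat : ℤ)) = m := Int.toNat_of_nonneg (le_of_lt hm0)
  refine descent p hp m.toNat ?_ ?_ T 1 ?_
  · have h : (0:ℤ) < (m.toNat : ℤ) := hmcast ▸ hm0
    exact_mod_cast h
  · have h : ((m.toNat : ℤ)) < (p : ℤ) := hmcast ▸ hmp
    exact_mod_cast h
  · rw [hmcast, mul_comm, ← hm]; ring

/-- If -3 is a square mod an odd prime p ≠ 3, then p ≡ 1 mod 3. -/
lemma prime_mod_three (p : ℕ) (hp : p.Prime) (hp2 : p ≠ 2) (hp3 : p ≠ 3)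
    (t : ZMod p) (ht : t ^ 2 = -3) : p % 3 = 1 := by
  haveI : Fact p.Prime := ⟨hp⟩
  have h2ne : (2 : ZMod p) ≠ 0 := by
    intro h
    have h' := (ZMod.natCast_eq_zero_iff 2 p).mp (by exact_mod_cast h)
    exact hp2 ((Nat.prime_dvd_prime_iff_eq hp Nat.prime_two).mp h')
  have h3ne : (3 : ZMod p) ≠ 0 := by
    intro h
    have h' := (ZMod.natCast_eq_zero_iff 3 p).mp (by exact_mod_cast h)
    exact hp3 ((Nat.prime_dvd_prime_iff_eq hp Nat.prime_three).mp h')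
  set ω : ZMod p := (t - 1) * (2 : ZMod p)⁻¹ with hω
  have h2ω : 2 * ω = t - 1 := by
    rw [hω]
    field_simp
  have hsum : ω ^ 2 + ω + 1 = 0 := by
    have key : (ω ^ 2 + ω + 1) * 4 = 0 := by
      linear_combination (2 * ω + t + 1) * h2ω + ht
    have h40 : (4 : ZMod p) ≠ 0 := by
      intro h
      have h' : (2 : ZMod p) * 2 = 0 := by linear_combination h
      rcases mul_eq_zero.mp h' with h'' | h'' <;> exact h2ne h''
    rcases mul_eq_zero.mp key with h | h
    · exact h
    · exact absurd h h40
  have hω3 : ω ^ 3 = 1 := by linear_combination (ω - 1) * hsum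
  have hωne : ω ≠ 1 := by
    intro h
    rw [h] at hsum
    exact h3ne (by linear_combination hsum)
  obtain ⟨u, hu⟩ : IsUnit ω := IsUnit.of_mul_eq_one (a := ω) (ω ^ 2) (by linear_combination hω3)
  have hu3 : u ^ 3 = 1 := by
    apply Units.ext
    rw [Units.val_pow_eq_pow_val, hu, hω3, Units.val_one]
  have hune : u ≠ 1 := by
    intro h
    apply hωne
    rw [← hu, h, Units.val_one]
  have horder : orderOf u = 3 := by
    rcases (Nat.prime_three).eq_one_or_self_of_dvd _ (orderOf_dvd_of_pow_eq_one hu3)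
      with h | h
    · exact absurd (orderOf_eq_one_iff.mp h) hune
    · exact h
  have hcard : 3 ∣ p - 1 := by
    rw [← horder, ← ZMod.card_units p]
    exact orderOf_dvd_card
  have := hp.two_le
  obtain ⟨k, hk⟩ := hcard
  omega

theorem stmt_13 (d : ℕ) (hd : 0 < d) (hsf : Squarefree d) (h3 : ¬ 3 ∣ d) :
    (∃ x y : ℤ, (d : ℤ) = x ^ 2 + 3 * y ^ 2) ↔
      ∀ p : ℕ, p.Prime → p ∣ d → p % 3 = 1 := by
  constructor
  · rintro ⟨x, y, hxy⟩ p hp hpd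
    have hp3 : p ≠ 3 := fun h => h3 (h ▸ hpd)
    -- p ≠ 2 : else 4 ∣ d contradicting squarefree
    have hp2 : p ≠ 2 := by
      rintro rfl
      have h4 : ¬ (4 ∣ d) := by
        intro h
        have h22 : 2 * 2 ∣ d := by omega
        have := Nat.isUnit_iff.mp (hsf 2 h22)
        omega
      have hz : ((d : ZMod 4)) = (x : ZMod 4) ^ 2 + 3 * (y : ZMod 4) ^ 2 := by
        have h := congrArg (fun z : ℤ => (z : ZMod 4)) hxy
        push_cast at h
        exact h
      have hne2 : ∀ a b : ZMod 4, a ^ 2 + 3 * b ^ 2 ≠ 2 := by decide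
      have hmod : d % 4 = 2 := by omega
      have hcast : (d : ZMod 4) = 2 := by
        rw [← ZMod.natCast_mod, hmod]
        norm_num
      exact hne2 _ _ (by rw [← hz, hcast])
    haveI : Fact p.Prime := ⟨hp⟩
    have hpdZ : (p : ℤ) ∣ x ^ 2 + 3 * y ^ 2 := by
      rw [← hxy]; exact_mod_cast Int.natCast_dvd_natCast.mpr hpd
    have hpprime : Prime ((p : ℤ)) := Nat.prime_iff_prime_int.mp hp
    -- p ∤ y, else p² ∣ d
    have hpy : ¬ ((p : ℤ) ∣ y) := by
      intro hy
      have hx2 : (p : ℤ) ∣ x ^ 2 := by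
        have h2 : (p : ℤ) ∣ 3 * y ^ 2 := ((hy.pow two_ne_zero).mul_left 3)
        have h := dvd_sub hpdZ h2
        simpa using h
      have hx : (p : ℤ) ∣ x := hpprime.dvd_of_dvd_pow hx2
      have hsq : ((p * p : ℕ) : ℤ) ∣ (d : ℤ) := by
        push_cast
        rw [hxy]
        have hxx : (p : ℤ) * p ∣ x ^ 2 := by
          obtain ⟨c, rfl⟩ := hx; exact ⟨c * c, by ring⟩
        have hyy : (p : ℤ) * p ∣ 3 * y ^ 2 := by
          obtain ⟨c, rfl⟩ := hy; exact ⟨3 * (c * c), by ring⟩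
        exact dvd_add hxx hyy
      have hsq' : p * p ∣ d := by exact_mod_cast hsq
      have := Nat.isUnit_iff.mp (hsf p hsq')
      have := hp.two_le
      omega
    -- construct a square root of -3 mod p
    have hy' : ((y : ZMod p)) ≠ 0 := by
      intro h
      exact hpy ((ZMod.intCast_zmod_eq_zero_iff_dvd y p).mp h)
    have heq : (x : ZMod p) ^ 2 + 3 * (y : ZMod p) ^ 2 = 0 := by
      have h : (((x ^ 2 + 3 * y ^ 2 : ℤ)) : ZMod p) = 0 :=
        (ZMod.intCast_zmod_eq_zero_iff_dvd _ p).mpr hpdZ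
      push_cast at h
      exact h
    have hyy : (y : ZMod p) * (y : ZMod p)⁻¹ = 1 := mul_inv_cancel₀ hy'
    refine prime_mod_three p hp hp2 hp3 ((x : ZMod p) * (y : ZMod p)⁻¹) ?_
    linear_combination ((y : ZMod p)⁻¹) ^ 2 * heq
      - 3 * ((y : ZMod p) * (y : ZMod p)⁻¹ + 1) * hyy
  · intro hall
    have hprod := Nat.prod_primeFactors_of_squarefree hsf
    have h : ∃ x y : ℤ, ((∏ p ∈ d.primeFactors, p : ℕ) : ℤ) = x ^ 2 + 3 * y ^ 2 := by
      rw [Nat.cast_prod]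
      refine Finset.prod_induction (fun p : ℕ => (p : ℤ))
        (fun n => ∃ x y : ℤ, n = x ^ 2 + 3 * y ^ 2)
        (fun a b ha hb => rep_mul ha hb) ⟨1, 0, by norm_num⟩ ?_
      intro q hq
      have hqp : q.Prime := Nat.prime_of_mem_primeFactors hq
      exact prime_rep q hqp (hall q hqp (Nat.dvd_of_mem_primeFactors hq))
    rwa [hprod] at h
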